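/- If u₀ is a measurable function with 0 ≤ u₀(x) ≤ 1 μ-almost everywhere, and there exist p₀ > 0 and p = (p₁,…,pₙ) ≥ 0 such that u₀(x) = θ(p₀ - p·x) (the indicator of the half-space {x : p·x ≤ p₀}) and lᵢ = ∫ xᵢ θ(p₀ - p·x) μ(dx) for all i, then u₀ maximizes ∫ u(x) μ(dx) over all measurable u with 0 ≤ u ≤ 1 μ-a.e. and ∫ xᵢ u(x) μ(dx) ≤ lᵢ for all i. -/

import Mathlib

open MeasureTheory ENNReal

lemma np_aux {a c d : ℝ≥0∞} (hd : d ≤ 1) (h : c ≤ a) : a * d + c ≤ a + c * d := by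
  calc a * d + c = a * d + c * (1 - d) + c * d := by
        rw [add_assoc, ← mul_add, tsub_add_cancel_of_le hd, mul_one]
    _ ≤ a * d + a * (1 - d) + c * d := by gcongr
    _ = a * (d + (1 - d)) + c * d := by ring
    _ = a + c * d := by rw [add_tsub_cancel_of_le hd, mul_one]

/-- Sufficiency part of the generalized Neyman-Pearson lemma: if `u₀` is the indicator
of the half-space `{x : p·x ≤ p₀}` with `p₀ > 0`, `p ≥ 0`, and the resource bounds `l i`
are exactly the resources consumed by `u₀`, then `u₀` maximizes total output among all
measurable `0 ≤ u ≤ 1` satisfying the resource constraints. -/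
theorem neyman_pearson_sufficiency
    (n : ℕ) (μ : Measure (Fin n → ℝ))
    (hsupp : ∀ᵐ x ∂μ, ∀ i, 0 ≤ x i)
    (p₀ : ℝ) (hp₀ : 0 < p₀) (p : Fin n → ℝ) (hp : ∀ i, 0 ≤ p i)
    (u₀ : (Fin n → ℝ) → ℝ≥0∞)
    (hu₀ : u₀ = fun x => if (∑ i, p i * x i) ≤ p₀ then 1 else 0)
    (l : Fin n → ℝ≥0∞)
    (hl : ∀ i, l i = ∫⁻ x, ENNReal.ofReal (x i) * u₀ x ∂μ)
    (u : (Fin n → ℝ) → ℝ≥0∞) (hu_meas : Measurable u)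
    (hu_le : ∀ᵐ x ∂μ, u x ≤ 1)
    (hu_res : ∀ i, ∫⁻ x, ENNReal.ofReal (x i) * u x ∂μ ≤ l i) :
    ∫⁻ x, u x ∂μ ≤ ∫⁻ x, u₀ x ∂μ := by
  by_cases hI : ∫⁻ x, u₀ x ∂μ = ∞
  · simp [hI]
  -- notation
  set P : ℝ≥0∞ := ENNReal.ofReal p₀ with hP
  set S : (Fin n → ℝ) → ℝ≥0∞ := fun x => ∑ i, ENNReal.ofReal (p i) * ENNReal.ofReal (x i)
    with hS
  have hu₀meas : Measurable u₀ := by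
    rw [hu₀]
    have : MeasurableSet {x : Fin n → ℝ | (∑ i, p i * x i) ≤ p₀} := by
      apply measurableSet_le _ measurable_const
      exact Finset.measurable_sum _ fun i _ => (measurable_pi_apply i).const_mul _
    exact Measurable.ite this measurable_const measurable_const
  have hfmeas : ∀ i : Fin n, Measurable fun x : Fin n → ℝ => ENNReal.ofReal (x i) :=
    fun i => (measurable_pi_apply i).ennreal_ofReal
  have hSmeas : Measurable S :=
    Finset.measurable_sum _ fun i _ => ((hfmeas i).const_mul _)
  -- S agrees with ofReal of the real sum when x ≥ 0
  have hSeq : ∀ x : Fin n → ℝ, (∀ i, 0 ≤ x i) → S x = ENNReal.ofReal (∑ i, p i * x i) := by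
    intro x hx
    rw [hS, ENNReal.ofReal_sum_of_nonneg (fun i _ => mul_nonneg (hp i) (hx i))]
    exact Finset.sum_congr rfl fun i _ => (ENNReal.ofReal_mul (hp i)).symm
  -- pointwise key inequality
  have hptwise : ∀ᵐ x ∂μ, P * u x + S x * u₀ x ≤ P * u₀ x + S x * u x := by
    filter_upwards [hsupp, hu_le] with x hx hux
    rw [hu₀]
    by_cases h : (∑ i, p i * x i) ≤ p₀
    · simp only [h, if_pos, mul_one]
      exact np_aux hux (by rw [hSeq x hx]; exact ENNReal.ofReal_le_ofReal h)
    · simp only [h, if_neg, not_false_iff, mul_zero, add_zero, zero_add]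
      refine mul_le_mul_left ?_ _
      rw [hSeq x hx]
      exact ENNReal.ofReal_le_ofReal (le_of_lt (not_le.mp h))
  -- expand the integrals of both sides
  have hexpand : ∀ v : (Fin n → ℝ) → ℝ≥0∞, Measurable v →
      ∫⁻ x, (P * v x + S x * v x) ∂μ
        = P * ∫⁻ x, v x ∂μ + ∑ i, ENNReal.ofReal (p i) * ∫⁻ x, ENNReal.ofReal (x i) * v x ∂μ := by
    intro v hv
    rw [lintegral_add_left (hv.const_mul _), lintegral_const_mul _ hv]
    congr 1
    have : ∀ x, S x * v x = ∑ i, ENNReal.ofReal (p i) * (ENNReal.ofReal (x i) * v x) := by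
      intro x
      rw [hS, Finset.sum_mul]
      exact Finset.sum_congr rfl fun i _ => mul_assoc _ _ _
    simp_rw [this]
    rw [lintegral_finset_sum _ fun i _ => (by exact ((hfmeas i).mul hv).const_mul _ :
      Measurable fun x => ENNReal.ofReal (p i) * (ENNReal.ofReal (x i) * v x))]
    exact Finset.sum_congr rfl fun i _ => lintegral_const_mul _ ((hfmeas i).mul hv)
  have hmain := lintegral_mono_ae hptwise
  -- rewrite both sides; note hptwise mixes u and u₀ so expand manually
  have hLHS : ∫⁻ x, (P * u x + S x * u₀ x) ∂μ
      = P * ∫⁻ x, u x ∂μ + ∑ i, ENNReal.ofReal (p i) * l i := by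
    rw [lintegral_add_left (hu_meas.const_mul _), lintegral_const_mul _ hu_meas]
    congr 1
    have : ∀ x, S x * u₀ x = ∑ i, ENNReal.ofReal (p i) * (ENNReal.ofReal (x i) * u₀ x) := by
      intro x
      rw [hS, Finset.sum_mul]
      exact Finset.sum_congr rfl fun i _ => mul_assoc _ _ _
    simp_rw [this]
    rw [lintegral_finset_sum _ fun i _ => (by exact ((hfmeas i).mul hu₀meas).const_mul _ :
      Measurable fun x => ENNReal.ofReal (p i) * (ENNReal.ofReal (x i) * u₀ x))]
    refine Finset.sum_congr rfl fun i _ => ?_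
    rw [lintegral_const_mul _ (by exact (hfmeas i).mul hu₀meas :
      Measurable fun x => ENNReal.ofReal (x i) * u₀ x), hl i]
  have hRHS : ∫⁻ x, (P * u₀ x + S x * u x) ∂μ
      ≤ P * ∫⁻ x, u₀ x ∂μ + ∑ i, ENNReal.ofReal (p i) * l i := by
    rw [lintegral_add_left (hu₀meas.const_mul _), lintegral_const_mul _ hu₀meas]
    refine add_le_add_right ?_ _
    have : ∀ x, S x * u x = ∑ i, ENNReal.ofReal (p i) * (ENNReal.ofReal (x i) * u x) := by
      intro x
      rw [hS, Finset.sum_mul]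
      exact Finset.sum_congr rfl fun i _ => mul_assoc _ _ _
    simp_rw [this]
    rw [lintegral_finset_sum _ fun i _ => (by exact ((hfmeas i).mul hu_meas).const_mul _ :
      Measurable fun x => ENNReal.ofReal (p i) * (ENNReal.ofReal (x i) * u x))]
    refine Finset.sum_le_sum fun i _ => ?_
    rw [lintegral_const_mul _ (by exact (hfmeas i).mul hu_meas :
      Measurable fun x => ENNReal.ofReal (x i) * u x)]
    exact mul_le_mul_right (hu_res i) _
  -- finiteness of the resource term
  have hfin : (∑ i, ENNReal.ofReal (p i) * l i) ≠ ∞ := by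
    have hbd : ∀ i : Fin n, ENNReal.ofReal (p i) * l i ≤ P * ∫⁻ x, u₀ x ∂μ := by
      intro i
      rw [hl i, ← lintegral_const_mul _ (by exact (hfmeas i).mul hu₀meas :
        Measurable fun x => ENNReal.ofReal (x i) * u₀ x),
        ← lintegral_const_mul _ hu₀meas]
      refine lintegral_mono_ae ?_
      filter_upwards [hsupp] with x hx
      rw [hu₀]
      by_cases h : (∑ i, p i * x i) ≤ p₀
      · simp only [h, if_pos, mul_one]
        calc ENNReal.ofReal (p i) * ENNReal.ofReal (x i)
            = ENNReal.ofReal (p i * x i) := (ENNReal.ofReal_mul (hp i)).symm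
          _ ≤ ENNReal.ofReal (∑ j, p j * x j) := by
              refine ENNReal.ofReal_le_ofReal ?_
              exact Finset.single_le_sum (fun j _ => mul_nonneg (hp j) (hx j))
                (Finset.mem_univ i)
          _ ≤ P := ENNReal.ofReal_le_ofReal h
      · simp [h]
    refine (lt_of_le_of_lt (Finset.sum_le_sum fun i _ => hbd i) ?_).ne
    refine ENNReal.sum_lt_top.mpr fun i _ => ?_
    exact ENNReal.mul_lt_top ENNReal.ofReal_lt_top (lt_top_iff_ne_top.mpr hI)
  have hfinal : P * ∫⁻ x, u x ∂μ ≤ P * ∫⁻ x, u₀ x ∂μ := by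
    have := le_trans (hLHS ▸ hmain) hRHS
    exact (ENNReal.add_le_add_iff_right hfin).mp this
  have hPne : P ≠ 0 := (ENNReal.ofReal_pos.mpr hp₀).ne'
  exact (ENNReal.mul_le_mul_iff_right hPne ENNReal.ofReal_ne_top).mp hfinal
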